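/- Let E be the edge set of a graph and E₀ ⊆ E with no bad loops (no cycle having exactly one edge outside E₀). Let v, w be two vertices, and suppose there is both a path from v to w all of whose edges lie in E₀, and a path from v to w with exactly one edge outside E₀. Then adding a new edge f joining v and w creates a bad loop whether f is declared to be in E₀ or in its complement. Contrapositively: if E₀ has no bad loops, then for any two vertices v, w at least one of the two extensions (f ∈ E₀ or f ∉ E₀) of the subset to E ∪ {f} has no bad loop passing through f. -/

import Mathlib

open SimpleGraph

private lemma walk_split_at_edge {V : Type*} {G : SimpleGraph V} {x y : V}
    (q : G.Walk x y) {e : Sym2 V} (he : e ∈ q.edges) :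
    ∃ (a b : V) (q₁ : G.Walk x a) (q₂ : G.Walk b y),
      e = s(a, b) ∧ q.edges = q₁.edges ++ s(a, b) :: q₂.edges := by
  induction q with
  | nil => simp at he
  | cons h q' ih =>
    rw [Walk.edges_cons, List.mem_cons] at he
    rcases he with he | he
    · exact ⟨_, _, Walk.nil, q', he, by simp [← he]⟩
    · obtain ⟨a, b, q₁, q₂, rfl, hdec⟩ := ih he
      exact ⟨a, b, Walk.cons h q₁, q₂, rfl, by simp [hdec]⟩

private lemma nodup_middle {α : Type*} {l₁ l₂ : List α} {x : α}
    (h : (l₁ ++ x :: l₂).Nodup) :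
    x ∉ l₁ ∧ x ∉ l₂ ∧ (l₂ ++ l₁).Nodup := by
  obtain ⟨h₁, h₂, hd⟩ := List.nodup_append'.mp h
  obtain ⟨hx₂, h₂'⟩ := List.nodup_cons.mp h₂
  refine ⟨fun hx => hd hx (List.mem_cons_self), hx₂,
    List.Nodup.append h₂' h₁ (fun a ha hb => hd hb (List.mem_cons_of_mem _ ha))⟩



/-- `BadLoopThrough G' E₀' f` says the graph `G'` contains a bad loop for the
edge set `E₀'` passing through the edge `f`: a cycle containing `f` with
exactly one edge not in `E₀'`. -/
def BadLoopThrough {V : Type*} (G' : SimpleGraph V) (E₀' : Set (Sym2 V)) (f : Sym2 V) : Prop :=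
  ∃ (u : V) (p : G'.Walk u u), p.IsCycle ∧ f ∈ p.edges ∧ ∃! e, e ∈ p.edges ∧ e ∉ E₀'

/-- `E₀` has no bad loops: no cycle of the graph has exactly one edge
outside `E₀`. -/
def NoBadLoops {V : Type*} (G : SimpleGraph V) (E₀ : Set (Sym2 V)) : Prop :=
  ∀ (u : V) (p : G.Walk u u), p.IsCycle → ¬ ∃! e, e ∈ p.edges ∧ e ∉ E₀

/-- Inserting a new edge `f = s(v,w)`.
(1) If there is a path from `v` to `w` all of whose edges lie in `E₀`, and a
path from `v` to `w` with exactly one edge outside `E₀`, then adding `f`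
creates a bad loop through `f` whether `f` is declared to be in `E₀` or not.
(2) Contrapositively, if `E₀` has no bad loops, then at least one of the two
extensions (`f ∈ E₀` or `f ∉ E₀`) of `E₀` to the enlarged edge set admits no
bad loop passing through `f`. -/
theorem insert_edge_no_bad_loops {V : Type*} (G : SimpleGraph V) (E₀ : Set (Sym2 V))
    (hE₀ : E₀ ⊆ G.edgeSet) (v w : V) (hvw : v ≠ w) (hnadj : ¬ G.Adj v w) :
    ((∃ p : G.Walk v w, p.IsPath ∧ ∀ e ∈ p.edges, e ∈ E₀) →
      (∃ q : G.Walk v w, q.IsPath ∧ ∃! e, e ∈ q.edges ∧ e ∉ E₀) →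
      BadLoopThrough (G ⊔ SimpleGraph.fromEdgeSet {s(v, w)}) (E₀ ∪ {s(v, w)}) s(v, w) ∧
      BadLoopThrough (G ⊔ SimpleGraph.fromEdgeSet {s(v, w)}) E₀ s(v, w)) ∧
    (NoBadLoops G E₀ →
      ¬ BadLoopThrough (G ⊔ SimpleGraph.fromEdgeSet {s(v, w)}) (E₀ ∪ {s(v, w)}) s(v, w) ∨
      ¬ BadLoopThrough (G ⊔ SimpleGraph.fromEdgeSet {s(v, w)}) E₀ s(v, w)) := by
  classical
  set G' := G ⊔ SimpleGraph.fromEdgeSet {s(v, w)} with hG'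
  have hfG : s(v, w) ∉ G.edgeSet := hnadj
  have hfE₀ : s(v, w) ∉ E₀ := fun h => hfG (hE₀ h)
  have hswap : s(w, v) = s(v, w) := Sym2.eq_swap
  have hGle : G ≤ G' := le_sup_left
  have hedge' : ∀ e ∈ G.edgeSet, e ∈ G'.edgeSet := fun e he => edgeSet_mono hGle he
  have hadj' : G'.Adj w v := by
    rw [hG', sup_adj, fromEdgeSet_adj]
    exact Or.inr ⟨by rw [hswap]; rfl, hvw.symm⟩
  have hG'e : ∀ e, e ∈ G'.edgeSet → e ∈ G.edgeSet ∨ e = s(v, w) := by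
    intro e he
    rw [hG', edgeSet_sup, edgeSet_fromEdgeSet] at he
    rcases he with he | he
    · exact Or.inl he
    · exact Or.inr he.1
  -- build a cycle from a v-w path in G
  have mkCycle : ∀ (r : G.Walk v w), r.IsPath →
      ∃ c : G'.Walk w w, c.IsCycle ∧ c.edges = s(v, w) :: r.edges := by
    intro r hr
    have hsub : ∀ e ∈ r.edges, e ∈ G'.edgeSet := fun e he =>
      hedge' e (r.edges_subset_edgeSet he)
    refine ⟨Walk.cons hadj' (r.transfer G' hsub), ?_, ?_⟩
    · rw [Walk.cons_isCycle_iff]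
      refine ⟨hr.transfer hsub, ?_⟩
      rw [Walk.edges_transfer, hswap]
      exact fun hmem => hfG (r.edges_subset_edgeSet hmem)
    · rw [Walk.edges_cons, Walk.edges_transfer, hswap]
  constructor
  · rintro ⟨p, hp, hpE⟩ ⟨q, hq, e₀, ⟨he₀q, he₀E⟩, huniq⟩
    constructor
    · obtain ⟨c, hc, hce⟩ := mkCycle q hq
      refine ⟨w, c, hc, by rw [hce]; exact List.mem_cons_self, e₀,
        ⟨by rw [hce]; exact List.mem_cons_of_mem _ he₀q, ?_⟩, ?_⟩
      · rintro (h | h)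
        · exact he₀E h
        · exact hfG (h ▸ q.edges_subset_edgeSet he₀q)
      · rintro e ⟨hec, heE⟩
        rw [hce, List.mem_cons] at hec
        rcases hec with rfl | hec
        · exact absurd (Or.inr rfl) heE
        · exact huniq e ⟨hec, fun h => heE (Or.inl h)⟩
    · obtain ⟨c, hc, hce⟩ := mkCycle p hp
      refine ⟨w, c, hc, by rw [hce]; exact List.mem_cons_self, s(v, w),
        ⟨by rw [hce]; exact List.mem_cons_self, hfE₀⟩, ?_⟩
      rintro e ⟨hec, heE⟩
      rw [hce, List.mem_cons] at hec
      rcases hec with rfl | hec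
      · rfl
      · exact absurd (hpE e hec) heE
  · intro hnb
    by_contra hcon
    push_neg at hcon
    obtain ⟨hb₁, hb₂⟩ := hcon
    obtain ⟨u₁, c₁, hc₁, hfc₁, e₀, ⟨he₀c, he₀E⟩, huniq₁⟩ := hb₁
    obtain ⟨u₂, c₂, hc₂, hfc₂, e₂, ⟨he₂c, he₂E⟩, huniq₂⟩ := hb₂
    set G₀ := SimpleGraph.fromEdgeSet E₀ with hG₀
    have hE₀G₀ : ∀ e ∈ E₀, e ∈ G₀.edgeSet := fun e he => by
      rw [hG₀, edgeSet_fromEdgeSet]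
      exact ⟨he, G.not_isDiag_of_mem_edgeSet (hE₀ he)⟩
    have toG₀ : ∀ {x y : V} (r : G'.Walk x y), (∀ e ∈ r.edges, e ∈ E₀) →
        G₀.Reachable x y := fun r hr => ⟨r.transfer G₀ (fun e he => hE₀G₀ e (hr e he))⟩
    -- process c₂ : all its edges other than f lie in E₀
    have he₂f : e₂ = s(v, w) := (huniq₂ _ ⟨hfc₂, hfE₀⟩).symm
    obtain ⟨a₂, b₂, q₁, q₂, hab₂, hdec₂⟩ := walk_split_at_edge c₂ hfc₂
    have hnd₂ : (q₁.edges ++ s(a₂, b₂) :: q₂.edges).Nodup := by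
      rw [← hdec₂]; exact hc₂.edges_nodup
    obtain ⟨hfq₁, hfq₂, hnd₂'⟩ := nodup_middle hnd₂
    have hr₂ : ∀ e ∈ (q₂.append q₁).edges, e ∈ E₀ := by
      intro e he
      rw [Walk.edges_append, List.mem_append] at he
      have hec : e ∈ c₂.edges := by
        rw [hdec₂]
        rcases he with h | h
        · exact List.mem_append_right _ (List.mem_cons_of_mem _ h)
        · exact List.mem_append_left _ h
      have hef : e ≠ s(v, w) := by
        rintro rfl
        rw [hab₂] at he
        rcases he with h | h
        · exact hfq₂ h
        · exact hfq₁ h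
      by_contra heE
      exact hef ((huniq₂ e ⟨hec, heE⟩).trans he₂f)
    have hreach₂ : G₀.Reachable v w := by
      have h := toG₀ (q₂.append q₁) hr₂
      rcases Sym2.eq_iff.mp hab₂ with ⟨rfl, rfl⟩ | ⟨rfl, rfl⟩
      · exact h.symm
      · exact h
    -- process c₁
    have he₀f : e₀ ≠ s(v, w) := fun h => he₀E (Or.inr (by rw [h]; rfl))
    have he₀E₀ : e₀ ∉ E₀ := fun h => he₀E (Or.inl h)
    have he₀G : e₀ ∈ G.edgeSet := by
      rcases hG'e e₀ (c₁.edges_subset_edgeSet he₀c) with h | h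
      · exact h
      · exact absurd h he₀f
    obtain ⟨a₁, b₁, p₁, p₂, hab₁, hdec₁⟩ := walk_split_at_edge c₁ hfc₁
    have hnd₁ : (p₁.edges ++ s(a₁, b₁) :: p₂.edges).Nodup := by
      rw [← hdec₁]; exact hc₁.edges_nodup
    obtain ⟨hfp₁, hfp₂, hnd₁'⟩ := nodup_middle hnd₁
    set r₁ := p₂.append p₁ with hr₁def
    have hr₁nd : r₁.edges.Nodup := by rw [hr₁def, Walk.edges_append]; exact hnd₁'
    have hr₁mem : ∀ e ∈ r₁.edges, e ∈ c₁.edges ∧ e ≠ s(v, w) := by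
      intro e he
      rw [hr₁def, Walk.edges_append, List.mem_append] at he
      constructor
      · rw [hdec₁]
        rcases he with h | h
        · exact List.mem_append_right _ (List.mem_cons_of_mem _ h)
        · exact List.mem_append_left _ h
      · rintro rfl
        rw [hab₁] at he
        rcases he with h | h
        · exact hfp₂ h
        · exact hfp₁ h
    have he₀r₁ : e₀ ∈ r₁.edges := by
      have : e₀ ∈ p₁.edges ++ s(a₁, b₁) :: p₂.edges := by rw [← hdec₁]; exact he₀c
      rw [hr₁def, Walk.edges_append, List.mem_append]
      rw [List.mem_append, List.mem_cons] at this
      rcases this with h | h | h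
      · exact Or.inr h
      · exact absurd (h.trans hab₁.symm) he₀f
      · exact Or.inl h
    have hr₁E : ∀ e ∈ r₁.edges, e ≠ e₀ → e ∈ E₀ := by
      intro e he hne
      have hec := (hr₁mem e he).1
      have : e ∈ E₀ ∪ {s(v, w)} := by
        by_contra h
        exact hne (huniq₁ e ⟨hec, h⟩)
      rcases this with h | h
      · exact h
      · exact absurd h ((hr₁mem e he).2)
    -- split r₁ at the bad edge e₀
    obtain ⟨a, b, t₁, t₂, habe, hdect⟩ := walk_split_at_edge r₁ he₀r₁
    have hndt : (t₁.edges ++ s(a, b) :: t₂.edges).Nodup := by rw [← hdect]; exact hr₁nd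
    obtain ⟨het₁, het₂, _⟩ := nodup_middle hndt
    have ht₁E : ∀ e ∈ t₁.edges, e ∈ E₀ := by
      intro e he
      refine hr₁E e (by rw [hdect]; exact List.mem_append_left _ he) ?_
      rintro rfl; rw [habe] at he; exact het₁ he
    have ht₂E : ∀ e ∈ t₂.edges, e ∈ E₀ := by
      intro e he
      refine hr₁E e (by rw [hdect]; exact List.mem_append_right _ (List.mem_cons_of_mem _ he)) ?_
      rintro rfl; rw [habe] at he; exact het₂ he
    have R1 : G₀.Reachable b₁ a := toG₀ t₁ ht₁E
    have R2 : G₀.Reachable b a₁ := toG₀ t₂ ht₂E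
    have Rba : G₀.Reachable b₁ a₁ := by
      rcases Sym2.eq_iff.mp hab₁ with ⟨rfl, rfl⟩ | ⟨rfl, rfl⟩
      · exact hreach₂.symm
      · exact hreach₂
    have Rab : G₀.Reachable b a := R2.trans (Rba.symm.trans R1)
    obtain ⟨P⟩ := Rab
    have hPsub : ∀ e ∈ P.edges, e ∈ G.edgeSet := by
      intro e he
      have := P.edges_subset_edgeSet he
      rw [hG₀, edgeSet_fromEdgeSet] at this
      exact hE₀ this.1
    have hPE₀ : ∀ e ∈ P.edges, e ∈ E₀ := by
      intro e he
      have := P.edges_subset_edgeSet he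
      rw [hG₀, edgeSet_fromEdgeSet] at this
      exact this.1
    set Q := (P.transfer G hPsub).toPath with hQ
    have hQE₀ : ∀ e ∈ (Q : G.Walk b a).edges, e ∈ E₀ := by
      intro e he
      have := Walk.edges_toPath_subset _ he
      rw [Walk.edges_transfer] at this
      exact hPE₀ e this
    have hGAdj : G.Adj a b := by rw [← mem_edgeSet, ← habe]; exact he₀G
    have hcyc : (Walk.cons hGAdj (Q : G.Walk b a)).IsCycle := by
      rw [Walk.cons_isCycle_iff]
      refine ⟨Q.2, fun h => ?_⟩
      exact he₀E₀ (habe ▸ hQE₀ _ h)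
    refine hnb a _ hcyc ⟨s(a, b), ⟨List.mem_cons_self, habe ▸ he₀E₀⟩, ?_⟩
    rintro e ⟨hec, heE⟩
    rw [Walk.edges_cons, List.mem_cons] at hec
    rcases hec with rfl | hec
    · rfl
    · exact absurd (hQE₀ e hec) heE
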